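/- Let S ∈ ℝ^{PN×PN} be invertible and suppose (ŝ, v̂) ∈ ℝ^P × ℝ^{PN} satisfies v̂ = T(ŝ) S v̂ and F(ŝ, v̂) = 0, with Δ(ŝ) invertible; set û_A := S v̂. Let φ_min := ‖Δ(ŝ)⁻¹‖⁻¹ (spectral norm on ℝ^{P×P}) and ψ_max := ‖R(ŝ, v̂) S⁻¹‖ (operator norm with respect to ‖·‖_{ℝ^P⊗ℝ^N_M}), where R(ŝ, v̂)ŵ := ŵ − T(Δ(ŝ)⁻¹ F^v(v̂, ŵ)) T(ŝ)⁻¹ v̂. Let t̂ be the implicit function with t̂(0) = 0 and F(ŝ + t̂(ŵ), v̂ + ŵ) = 0 defined in a neighborhood of 0, and define one step of the spectral inverse iteration near û_A by Φ(û) := T(ŝ + t̂(S⁻¹û − v̂))⁻¹ S⁻¹ û. Then for every ε > 0 there exists δ > 0 such that ‖Φ(û) − û_A‖_{ℝ^P⊗ℝ^N_M} ≤ (ψ_max/φ_min + ε) ‖û − û_A‖_{ℝ^P⊗ℝ^N_M} whenever ‖û − û_A‖_{ℝ^P⊗ℝ^N_M} < δ. -/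

import Mathlib

open Matrix Filter
namespace Stmt13Aux
set_option linter.unusedSectionVars false
set_option linter.unusedVariables false
set_option maxHeartbeats 1000000
variable {ι : Type*} [Fintype ι] [DecidableEq ι] {N : ℕ}
/-- Blockwise action of a `ι × ι` matrix on `ι → Fin N → ℝ`. -/
def opA (B : Matrix ι ι ℝ) (y : ι → Fin N → ℝ) : ι → Fin N → ℝ :=
  fun α i => ∑ β, B α β * y β i

lemma opA_one (y : ι → Fin N → ℝ) : opA 1 y = y := by
  funext α i
  simp [opA, Matrix.one_apply, Finset.sum_ite_eq, ite_mul]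

lemma opA_mul (B C : Matrix ι ι ℝ) (y : ι → Fin N → ℝ) :
    opA (B * C) y = opA B (opA C y) := by
  funext α i
  simp only [opA, Matrix.mul_apply, Finset.sum_mul, Finset.mul_sum]
  rw [Finset.sum_comm]
  exact Finset.sum_congr rfl fun γ _ => Finset.sum_congr rfl fun β _ => mul_assoc _ _ _

lemma opA_add_right (B : Matrix ι ι ℝ) (y z : ι → Fin N → ℝ) :
    opA B (y + z) = opA B y + opA B z := by
  funext α i
  simp [opA, mul_add, Finset.sum_add_distrib]

lemma opA_sub_right (B : Matrix ι ι ℝ) (y z : ι → Fin N → ℝ) :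
    opA B (y - z) = opA B y - opA B z := by
  funext α i
  simp [opA, mul_sub, Finset.sum_sub_distrib]

lemma opA_add_left (B C : Matrix ι ι ℝ) (y : ι → Fin N → ℝ) :
    opA (B + C) y = opA B y + opA C y := by
  funext α i
  simp [opA, add_mul, Finset.sum_add_distrib]

lemma opA_sub_left (B C : Matrix ι ι ℝ) (y : ι → Fin N → ℝ) :
    opA (B - C) y = opA B y - opA C y := by
  funext α i
  simp [opA, sub_mul, Finset.sum_sub_distrib]

lemma opA_norm_le (B : Matrix ι ι ℝ) (y : ι → Fin N → ℝ) :
    ‖opA B y‖ ≤ (∑ α, ∑ β, |B α β|) * ‖y‖ := by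
  have hC : (0:ℝ) ≤ (∑ α, ∑ β, |B α β|) * ‖y‖ :=
    mul_nonneg (Finset.sum_nonneg fun _ _ => Finset.sum_nonneg fun _ _ => abs_nonneg _)
      (norm_nonneg _)
  rw [pi_norm_le_iff_of_nonneg hC]
  intro α
  rw [pi_norm_le_iff_of_nonneg hC]
  intro i
  have h1 : |∑ β, B α β * y β i| ≤ ∑ β, |B α β| * ‖y‖ := by
    refine (Finset.abs_sum_le_sum_abs _ _).trans (Finset.sum_le_sum fun β _ => ?_)
    rw [abs_mul]
    refine mul_le_mul_of_nonneg_left ?_ (abs_nonneg _)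
    calc |y β i| ≤ ‖y β‖ := by
          simpa [Real.norm_eq_abs] using norm_le_pi_norm (y β) i
      _ ≤ ‖y‖ := norm_le_pi_norm y β
  refine le_trans (by simpa [opA, Real.norm_eq_abs] using h1) ?_
  rw [← Finset.sum_mul]
  refine mul_le_mul_of_nonneg_right ?_ (norm_nonneg _)
  exact Finset.single_le_sum (f := fun α => ∑ β, |B α β|)
    (fun _ _ => Finset.sum_nonneg fun _ _ => abs_nonneg _) (Finset.mem_univ α)

lemma opA_norm_le' {B : Matrix ι ι ℝ} {y : ι → Fin N → ℝ} {C1 C2 : ℝ}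
    (h1 : (∑ α, ∑ β, |B α β|) ≤ C1) (h2 : ‖y‖ ≤ C2) :
    ‖opA B y‖ ≤ C1 * C2 := by
  refine (opA_norm_le B y).trans (mul_le_mul h1 h2 (norm_nonneg _) ?_)
  exact le_trans (Finset.sum_nonneg fun _ _ => Finset.sum_nonneg fun _ _ => abs_nonneg _) h1

lemma mulVec_norm_le (B : Matrix ι ι ℝ) (x : ι → ℝ) :
    ‖B *ᵥ x‖ ≤ (∑ α, ∑ β, |B α β|) * ‖x‖ := by
  have hC : (0:ℝ) ≤ (∑ α, ∑ β, |B α β|) * ‖x‖ :=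
    mul_nonneg (Finset.sum_nonneg fun _ _ => Finset.sum_nonneg fun _ _ => abs_nonneg _)
      (norm_nonneg _)
  rw [pi_norm_le_iff_of_nonneg hC]
  intro α
  have h1 : |∑ β, B α β * x β| ≤ ∑ β, |B α β| * ‖x‖ := by
    refine (Finset.abs_sum_le_sum_abs _ _).trans (Finset.sum_le_sum fun β _ => ?_)
    rw [abs_mul]
    refine mul_le_mul_of_nonneg_left ?_ (abs_nonneg _)
    simpa [Real.norm_eq_abs] using norm_le_pi_norm x β
  refine le_trans (by simpa [Matrix.mulVec, dotProduct, Real.norm_eq_abs] using h1) ?_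
  rw [← Finset.sum_mul]
  refine mul_le_mul_of_nonneg_right ?_ (norm_nonneg _)
  exact Finset.single_le_sum (f := fun α => ∑ β, |B α β|)
    (fun _ _ => Finset.sum_nonneg fun _ _ => abs_nonneg _) (Finset.mem_univ α)

lemma mulVec_norm_le' {B : Matrix ι ι ℝ} {x : ι → ℝ} {C1 C2 : ℝ}
    (h1 : (∑ α, ∑ β, |B α β|) ≤ C1) (h2 : ‖x‖ ≤ C2) :
    ‖B *ᵥ x‖ ≤ C1 * C2 := by
  refine (mulVec_norm_le B x).trans (mul_le_mul h1 h2 (norm_nonneg _) ?_)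
  exact le_trans (Finset.sum_nonneg fun _ _ => Finset.sum_nonneg fun _ _ => abs_nonneg _) h1

lemma dot_symm {N : ℕ} (M : Matrix (Fin N) (Fin N) ℝ) (hMsymm : Mᵀ = M)
    (a b : Fin N → ℝ) : a ⬝ᵥ M *ᵥ b = b ⬝ᵥ M *ᵥ a := by
  rw [Matrix.dotProduct_mulVec, ← Matrix.mulVec_transpose, hMsymm, dotProduct_comm]

lemma expand_F (c : ι → ι → ι → ℝ)
    (hc1 : ∀ α β γ, c α β γ = c β α γ)
    (hc2 : ∀ α β γ, c α β γ = c α γ β)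
    (M : Matrix (Fin N) (Fin N) ℝ) (hMsymm : Mᵀ = M)
    (s τ : ι → ℝ) (v w : ι → Fin N → ℝ) (α : ι) :
    ((∑ β, ∑ γ, c α β γ * (s + τ) β * (s + τ) γ) -
      ∑ β, ∑ γ, c α β γ * ((v + w) β ⬝ᵥ (M *ᵥ (v + w) γ)))
    = ((∑ β, ∑ γ, c α β γ * s β * s γ) - ∑ β, ∑ γ, c α β γ * (v β ⬝ᵥ (M *ᵥ v γ)))
      + 2 * (∑ β, ∑ γ, c α β γ * s β * τ γ) + (∑ β, ∑ γ, c α β γ * τ β * τ γ)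
      - 2 * (∑ β, ∑ γ, c α β γ * (v β ⬝ᵥ (M *ᵥ w γ)))
      - (∑ β, ∑ γ, c α β γ * (w β ⬝ᵥ (M *ᵥ w γ))) := by
  have hsym1 : (∑ β, ∑ γ, c α β γ * τ β * s γ) = ∑ β, ∑ γ, c α β γ * s β * τ γ := by
    rw [Finset.sum_comm]
    refine Finset.sum_congr rfl fun β _ => Finset.sum_congr rfl fun γ _ => ?_
    rw [hc2 α γ β]; ring
  have hsym2 : (∑ β, ∑ γ, c α β γ * (w β ⬝ᵥ (M *ᵥ v γ))) =
      ∑ β, ∑ γ, c α β γ * (v β ⬝ᵥ (M *ᵥ w γ)) := by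
    rw [Finset.sum_comm]
    refine Finset.sum_congr rfl fun β _ => Finset.sum_congr rfl fun γ _ => ?_
    rw [hc2 α γ β, dot_symm M hMsymm]
  have e1 : (∑ β, ∑ γ, c α β γ * (s + τ) β * (s + τ) γ)
      = (∑ β, ∑ γ, c α β γ * s β * s γ) + (∑ β, ∑ γ, c α β γ * s β * τ γ)
        + (∑ β, ∑ γ, c α β γ * τ β * s γ) + (∑ β, ∑ γ, c α β γ * τ β * τ γ) := by
    simp only [Pi.add_apply, mul_add, add_mul, Finset.sum_add_distrib]
    ring
  have e2 : (∑ β, ∑ γ, c α β γ * ((v + w) β ⬝ᵥ (M *ᵥ (v + w) γ)))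
      = (∑ β, ∑ γ, c α β γ * (v β ⬝ᵥ (M *ᵥ v γ))) + (∑ β, ∑ γ, c α β γ * (v β ⬝ᵥ (M *ᵥ w γ)))
        + (∑ β, ∑ γ, c α β γ * (w β ⬝ᵥ (M *ᵥ v γ))) + (∑ β, ∑ γ, c α β γ * (w β ⬝ᵥ (M *ᵥ w γ))) := by
    simp only [Pi.add_apply, Matrix.mulVec_add, add_dotProduct, dotProduct_add,
      mul_add, Finset.sum_add_distrib]
    ring
  rw [e1, e2, hsym1, hsym2]; ring

lemma mulVec_Δ (c : ι → ι → ι → ℝ)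
    (hc1 : ∀ α β γ, c α β γ = c β α γ)
    (s τ : ι → ℝ) (α : ι) :
    ((Matrix.of fun α β => ∑ γ, c γ α β * s γ : Matrix ι ι ℝ) *ᵥ τ) α
      = ∑ β, ∑ γ, c α β γ * s β * τ γ := by
  simp only [Matrix.mulVec, dotProduct, Matrix.of_apply, Finset.sum_mul]
  rw [Finset.sum_comm]
  refine Finset.sum_congr rfl fun β _ => Finset.sum_congr rfl fun γ _ => ?_
  rw [hc1 β α γ]
lemma dot_self_nonneg (x : ι → ℝ) : 0 ≤ x ⬝ᵥ x :=
  Finset.sum_nonneg fun i _ => mul_self_nonneg _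

lemma quad_eq (M B : Matrix (Fin N) (Fin N) ℝ) (hBB : B * B = M) (hBsymm : Bᵀ = B)
    (a : Fin N → ℝ) : a ⬝ᵥ (M *ᵥ a) = (B *ᵥ a) ⬝ᵥ (B *ᵥ a) := by
  rw [← hBB, ← Matrix.mulVec_mulVec, Matrix.dotProduct_mulVec, ← Matrix.mulVec_transpose, hBsymm]

lemma quad_eq_sum (M B : Matrix (Fin N) (Fin N) ℝ) (hBB : B * B = M) (hBsymm : Bᵀ = B)
    (a : Fin N → ℝ) : a ⬝ᵥ (M *ᵥ a) = ∑ i, ((B *ᵥ a) i) ^ 2 := by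
  rw [quad_eq M B hBB hBsymm]
  simp [dotProduct, pow_two]

/-- The M-norm as a Euclidean norm. -/
lemma mn_eq_norm (M B : Matrix (Fin N) (Fin N) ℝ) (hBB : B * B = M) (hBsymm : Bᵀ = B)
    (u : ι → Fin N → ℝ) :
    Real.sqrt (∑ α, u α ⬝ᵥ (M *ᵥ u α)) =
      ‖(WithLp.equiv 2 ((ι × Fin N) → ℝ)).symm (fun p => (B *ᵥ u p.1) p.2)‖ := by
  rw [EuclideanSpace.norm_eq]
  congr 1
  rw [Fintype.sum_prod_type]
  refine Finset.sum_congr rfl fun α _ => ?_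
  rw [quad_eq_sum M B hBB hBsymm]
  refine Finset.sum_congr rfl fun i _ => ?_
  simp [WithLp.equiv_symm_apply, Real.norm_eq_abs, sq_abs]

lemma mn_triangle (M B : Matrix (Fin N) (Fin N) ℝ) (hBB : B * B = M) (hBsymm : Bᵀ = B)
    (x y : ι → Fin N → ℝ) :
    Real.sqrt (∑ α, (x + y) α ⬝ᵥ (M *ᵥ (x + y) α)) ≤
      Real.sqrt (∑ α, x α ⬝ᵥ (M *ᵥ x α)) + Real.sqrt (∑ α, y α ⬝ᵥ (M *ᵥ y α)) := by
  rw [mn_eq_norm M B hBB hBsymm, mn_eq_norm M B hBB hBsymm, mn_eq_norm M B hBB hBsymm]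
  have : ((WithLp.equiv 2 ((ι × Fin N) → ℝ)).symm (fun p => (B *ᵥ (x + y) p.1) p.2)) =
      (WithLp.equiv 2 ((ι × Fin N) → ℝ)).symm (fun p => (B *ᵥ x p.1) p.2) +
      (WithLp.equiv 2 ((ι × Fin N) → ℝ)).symm (fun p => (B *ᵥ y p.1) p.2) := by
    rw [WithLp.equiv_symm_apply, ← WithLp.toLp_add]
    congr 1
    funext p
    simp [Matrix.mulVec_add]
  rw [this]
  exact norm_add_le _ _

lemma mn_upper (M B : Matrix (Fin N) (Fin N) ℝ) (hBB : B * B = M) (hBsymm : Bᵀ = B)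
    (u : ι → Fin N → ℝ) :
    Real.sqrt (∑ α, u α ⬝ᵥ (M *ᵥ u α)) ≤
      (Real.sqrt (Fintype.card ι * N) * ((∑ i, ∑ j, |B i j|) + 1)) * ‖u‖ := by
  set bC : ℝ := (∑ i, ∑ j, |B i j|) + 1 with hbC
  have hbC0 : 0 ≤ bC := by
    have : (0:ℝ) ≤ ∑ i, ∑ j, |B i j| :=
      Finset.sum_nonneg fun _ _ => Finset.sum_nonneg fun _ _ => abs_nonneg _
    linarith
  have hx : ∀ (α : ι) (i : Fin N), ((B *ᵥ u α) i)^2 ≤ (bC * ‖u‖)^2 := by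
    intro α i
    have h1 : |(B *ᵥ u α) i| ≤ bC * ‖u‖ := by
      have h2 : ‖B *ᵥ u α‖ ≤ bC * ‖u‖ := by
        refine mulVec_norm_le' (le_of_lt (lt_add_one _)) (norm_le_pi_norm u α)
      calc |(B *ᵥ u α) i| ≤ ‖B *ᵥ u α‖ := by
            simpa [Real.norm_eq_abs] using norm_le_pi_norm (B *ᵥ u α) i
        _ ≤ bC * ‖u‖ := h2
    calc ((B *ᵥ u α) i)^2 = |(B *ᵥ u α) i|^2 := (sq_abs _).symm
      _ ≤ (bC * ‖u‖)^2 := by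
          exact pow_le_pow_left₀ (abs_nonneg _) h1 2
  have hsum : (∑ α, u α ⬝ᵥ (M *ᵥ u α)) ≤ (Fintype.card ι * N : ℝ) * (bC * ‖u‖)^2 := by
    calc (∑ α, u α ⬝ᵥ (M *ᵥ u α)) = ∑ α, ∑ i, ((B *ᵥ u α) i)^2 := by
          exact Finset.sum_congr rfl fun α _ => quad_eq_sum M B hBB hBsymm _
      _ ≤ ∑ (_ : ι), ∑ (_ : Fin N), (bC * ‖u‖)^2 :=
          Finset.sum_le_sum fun α _ => Finset.sum_le_sum fun i _ => hx α i
      _ = (Fintype.card ι * N : ℝ) * (bC * ‖u‖)^2 := by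
          simp [Finset.sum_const, Finset.card_univ, mul_assoc]
  calc Real.sqrt (∑ α, u α ⬝ᵥ (M *ᵥ u α)) ≤
        Real.sqrt ((Fintype.card ι * N : ℝ) * (bC * ‖u‖)^2) := Real.sqrt_le_sqrt hsum
    _ = Real.sqrt (Fintype.card ι * N) * (bC * ‖u‖) := by
        rw [Real.sqrt_mul (by positivity), Real.sqrt_sq (by positivity)]
    _ = (Real.sqrt (Fintype.card ι * N) * bC) * ‖u‖ := by ring


lemma mn_lower (M B Binv : Matrix (Fin N) (Fin N) ℝ) (hBB : B * B = M) (hBsymm : Bᵀ = B)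
    (hrec : ∀ a : Fin N → ℝ, Binv *ᵥ (B *ᵥ a) = a) (u : ι → Fin N → ℝ) :
    ‖u‖ ≤ ((∑ i, ∑ j, |Binv i j|) + 1) * Real.sqrt (∑ α, u α ⬝ᵥ (M *ᵥ u α)) := by
  set mn : ℝ := Real.sqrt (∑ α, u α ⬝ᵥ (M *ᵥ u α)) with hmn
  have hmn0 : 0 ≤ mn := Real.sqrt_nonneg _
  set biC : ℝ := (∑ i, ∑ j, |Binv i j|) + 1 with hbiC
  have hbiC0 : (0:ℝ) ≤ ∑ i, ∑ j, |Binv i j| :=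
    Finset.sum_nonneg fun _ _ => Finset.sum_nonneg fun _ _ => abs_nonneg _
  have hterm : ∀ (α : ι) (j : Fin N), |(B *ᵥ u α) j| ≤ mn := by
    intro α j
    have h2 : ((B *ᵥ u α) j)^2 ≤ ∑ i, ((B *ᵥ u α) i)^2 :=
      Finset.single_le_sum (f := fun i => ((B *ᵥ u α) i)^2)
        (fun i _ => sq_nonneg _) (Finset.mem_univ j)
    have h3 : (∑ i, ((B *ᵥ u α) i)^2) = u α ⬝ᵥ (M *ᵥ u α) :=
      (quad_eq_sum M B hBB hBsymm _).symm
    have h4 : u α ⬝ᵥ (M *ᵥ u α) ≤ ∑ α', u α' ⬝ᵥ (M *ᵥ u α') :=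
      Finset.single_le_sum (f := fun α' => u α' ⬝ᵥ (M *ᵥ u α'))
        (fun α' _ => by
          show 0 ≤ u α' ⬝ᵥ (M *ᵥ u α')
          rw [quad_eq_sum M B hBB hBsymm]; positivity) (Finset.mem_univ α)
    calc |(B *ᵥ u α) j| = Real.sqrt (((B *ᵥ u α) j)^2) := (Real.sqrt_sq_eq_abs _).symm
      _ ≤ mn := Real.sqrt_le_sqrt (by linarith)
  have hC : (0:ℝ) ≤ biC * mn := by positivity
  rw [pi_norm_le_iff_of_nonneg hC]
  intro α
  rw [pi_norm_le_iff_of_nonneg hC]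
  intro i
  have hu : u α = Binv *ᵥ (B *ᵥ u α) := (hrec _).symm
  have h5 : |u α i| ≤ ∑ j, |Binv i j| * mn := by
    conv_lhs => rw [hu]
    simp only [Matrix.mulVec, dotProduct]
    refine (Finset.abs_sum_le_sum_abs _ _).trans (Finset.sum_le_sum fun j _ => ?_)
    rw [abs_mul]
    exact mul_le_mul_of_nonneg_left (hterm α j) (abs_nonneg _)
  rw [Real.norm_eq_abs]
  refine h5.trans ?_
  rw [← Finset.sum_mul]
  refine mul_le_mul_of_nonneg_right ?_ hmn0
  have h6 : (∑ j, |Binv i j|) ≤ ∑ i', ∑ j, |Binv i' j| :=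
    Finset.single_le_sum (f := fun i' => ∑ j, |Binv i' j|)
      (fun _ _ => Finset.sum_nonneg fun _ _ => abs_nonneg _) (Finset.mem_univ i)
  linarith

lemma mn_opA_le (M B : Matrix (Fin N) (Fin N) ℝ) (hBB : B * B = M) (hBsymm : Bᵀ = B)
    (Di : Matrix ι ι ℝ) (phimin : ℝ) (hphimin_pos : 0 < phimin)
    (hphi : ∀ cc : ι → ℝ,
      Real.sqrt ((Di *ᵥ cc) ⬝ᵥ (Di *ᵥ cc)) ≤ phimin⁻¹ * Real.sqrt (cc ⬝ᵥ cc))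
    (x : ι → Fin N → ℝ) :
    Real.sqrt (∑ α, (opA Di x) α ⬝ᵥ (M *ᵥ (opA Di x) α)) ≤
      phimin⁻¹ * Real.sqrt (∑ α, x α ⬝ᵥ (M *ᵥ x α)) := by
  have hsq : ∀ cc : ι → ℝ, (Di *ᵥ cc) ⬝ᵥ (Di *ᵥ cc) ≤ phimin⁻¹^2 * (cc ⬝ᵥ cc) := by
    intro cc
    have ha := dot_self_nonneg (Di *ᵥ cc)
    have hb := dot_self_nonneg cc
    have h2 : Real.sqrt ((Di *ᵥ cc) ⬝ᵥ (Di *ᵥ cc)) ^ 2 ≤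
        (phimin⁻¹ * Real.sqrt (cc ⬝ᵥ cc))^2 :=
      pow_le_pow_left₀ (Real.sqrt_nonneg _) (hphi cc) 2
    rw [Real.sq_sqrt ha, mul_pow, Real.sq_sqrt hb] at h2
    exact h2
  have hcomm : ∀ (α : ι) (i : Fin N),
      (B *ᵥ (opA Di x) α) i = (Di *ᵥ (fun β => (B *ᵥ x β) i)) α := by
    intro α i
    simp only [Matrix.mulVec, dotProduct, opA, Finset.mul_sum]
    rw [Finset.sum_comm]
    exact Finset.sum_congr rfl fun β _ => Finset.sum_congr rfl fun j _ => by ring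
  have main : (∑ α, (opA Di x) α ⬝ᵥ (M *ᵥ (opA Di x) α)) ≤
      phimin⁻¹^2 * ∑ α, x α ⬝ᵥ (M *ᵥ x α) := by
    calc (∑ α, (opA Di x) α ⬝ᵥ (M *ᵥ (opA Di x) α))
        = ∑ α, ∑ i, ((B *ᵥ (opA Di x) α) i)^2 :=
          Finset.sum_congr rfl fun α _ => quad_eq_sum M B hBB hBsymm _
      _ = ∑ i, ∑ α, ((Di *ᵥ (fun β => (B *ᵥ x β) i)) α)^2 := by
          rw [Finset.sum_comm]
          exact Finset.sum_congr rfl fun i _ => Finset.sum_congr rfl fun α _ => by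
            rw [hcomm α i]
      _ = ∑ i, (Di *ᵥ (fun β => (B *ᵥ x β) i)) ⬝ᵥ (Di *ᵥ (fun β => (B *ᵥ x β) i)) := by
          refine Finset.sum_congr rfl fun i _ => ?_
          simp [dotProduct, pow_two]
      _ ≤ ∑ i, phimin⁻¹^2 * ((fun β => (B *ᵥ x β) i) ⬝ᵥ (fun β => (B *ᵥ x β) i)) :=
          Finset.sum_le_sum fun i _ => hsq _
      _ = phimin⁻¹^2 * ∑ i, ∑ β, ((B *ᵥ x β) i)^2 := by
          rw [← Finset.mul_sum]
          congr 1
          refine Finset.sum_congr rfl fun i _ => ?_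
          simp [dotProduct, pow_two]
      _ = phimin⁻¹^2 * ∑ β, x β ⬝ᵥ (M *ᵥ x β) := by
          rw [Finset.sum_comm]
          congr 1
          exact Finset.sum_congr rfl fun β _ => (quad_eq_sum M B hBB hBsymm _).symm
  calc Real.sqrt (∑ α, (opA Di x) α ⬝ᵥ (M *ᵥ (opA Di x) α))
      ≤ Real.sqrt (phimin⁻¹^2 * ∑ α, x α ⬝ᵥ (M *ᵥ x α)) := Real.sqrt_le_sqrt main
    _ = phimin⁻¹ * Real.sqrt (∑ α, x α ⬝ᵥ (M *ᵥ x α)) := by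
        rw [Real.sqrt_mul (sq_nonneg _), Real.sqrt_sq (by positivity)]

end Stmt13Aux
set_option maxHeartbeats 6400000 in
/-- Theorem 5.8 (asymptotic contraction of the spectral inverse iteration) of
Hakula–Laaksonen: near a fixed point `û_A` one step of the spectral inverse iteration
contracts the error with asymptotic factor `ψ_max / φ_min`. -/
theorem stmt13
    {ι : Type*} [Fintype ι] [DecidableEq ι]
    (c : ι → ι → ι → ℝ)
    (hc1 : ∀ α β γ, c α β γ = c β α γ)
    (hc2 : ∀ α β γ, c α β γ = c α γ β)
    (N : ℕ)
    (M : Matrix (Fin N) (Fin N) ℝ)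
    (hMsymm : Mᵀ = M)
    (hMpos : ∀ z : Fin N → ℝ, z ≠ 0 → 0 < z ⬝ᵥ (M *ᵥ z))
    (F : (ι → ℝ) → (ι → Fin N → ℝ) → ι → ℝ)
    (hF : F = fun sh vh α => (∑ β, ∑ γ, c α β γ * sh β * sh γ) -
        ∑ β, ∑ γ, c α β γ * (vh β ⬝ᵥ (M *ᵥ vh γ)))
    (Fv : (ι → Fin N → ℝ) → (ι → Fin N → ℝ) → ι → ℝ)
    (hFv : Fv = fun vh wh α => ∑ β, ∑ γ, c α β γ * (vh β ⬝ᵥ (M *ᵥ wh γ)))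
    (Δ : (ι → ℝ) → Matrix ι ι ℝ)
    (hΔ : Δ = fun sh => Matrix.of fun α β => ∑ γ, c γ α β * sh γ)
    (T : (ι → ℝ) → (ι → Fin N → ℝ) → ι → Fin N → ℝ)
    (hT : T = fun sh u α i => ∑ β, Δ sh α β * u β i)
    (MnormPN : (ι → Fin N → ℝ) → ℝ)
    (hMnormPN : MnormPN = fun u => Real.sqrt (∑ α, u α ⬝ᵥ (M *ᵥ u α)))
    (S : (ι → Fin N → ℝ) ≃ₗ[ℝ] (ι → Fin N → ℝ))
    (sh : ι → ℝ) (vh : ι → Fin N → ℝ)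
    (hfix : vh = T sh (S vh))
    (hFzero : F sh vh = 0)
    (hΔinv : IsUnit (Δ sh))
    (uA : ι → Fin N → ℝ) (huA : uA = S vh)
    (Rop : (ι → Fin N → ℝ) → ι → Fin N → ℝ)
    (hRop : Rop = fun w =>
      w - T ((Δ sh)⁻¹ *ᵥ Fv vh w) (fun α i => ∑ β, (Δ sh)⁻¹ α β * vh β i))
    (phimin : ℝ) (hphimin_pos : 0 < phimin)
    (hphimin : ∀ cc : ι → ℝ,
      Real.sqrt (((Δ sh)⁻¹ *ᵥ cc) ⬝ᵥ ((Δ sh)⁻¹ *ᵥ cc)) ≤ phimin⁻¹ * Real.sqrt (cc ⬝ᵥ cc))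
    (psimax : ℝ)
    (hpsimax : ∀ w : ι → Fin N → ℝ, MnormPN (Rop (S.symm w)) ≤ psimax * MnormPN w)
    (t : (ι → Fin N → ℝ) → ι → ℝ)
    (ht0 : t 0 = 0)
    (htcont : ContinuousAt t 0)
    (htF : ∀ᶠ w in nhds (0 : ι → Fin N → ℝ), F (sh + t w) (vh + w) = 0)
    (Φ : (ι → Fin N → ℝ) → ι → Fin N → ℝ)
    (hΦ : Φ = fun u α i =>
      ∑ β, (Δ (sh + t (S.symm u - vh)))⁻¹ α β * (S.symm u) β i) :
    ∀ ε > (0 : ℝ), ∃ δ > (0 : ℝ), ∀ u : ι → Fin N → ℝ,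
      MnormPN (u - uA) < δ →
      MnormPN (Φ u - uA) ≤ (psimax / phimin + ε) * MnormPN (u - uA) := by
  classical
  open Stmt13Aux in
  -- matrix inverse facts for Δ sh
  have hdet : IsUnit (Δ sh).det := (Matrix.isUnit_iff_isUnit_det _).mp hΔinv
  set Di : Matrix ι ι ℝ := (Δ sh)⁻¹ with hDi
  have hDiL : Di * Δ sh = 1 := Matrix.nonsing_inv_mul _ hdet
  have hDiR : Δ sh * Di = 1 := Matrix.mul_nonsing_inv _ hdet
  -- positive definiteness of M and its square root
  have hMpd : M.PosDef := by
    refine Matrix.posDef_iff_dotProduct_mulVec.mpr ⟨?_, ?_⟩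
    · show Mᴴ = M
      have h1 : Mᴴ = Mᵀ := by
        ext i j; simp [Matrix.conjTranspose_apply]
      rw [h1, hMsymm]
    · intro x hx
      have hs : star x = x := funext fun i => star_trivial _
      rw [hs]
      exact hMpos x hx
  set B : Matrix (Fin N) (Fin N) ℝ := (open scoped MatrixOrder in CFC.sqrt M) with hB
  have hBB : B * B = M := by
    open scoped MatrixOrder in exact CFC.sqrt_mul_sqrt_self M hMpd.posSemidef.nonneg
  have hBH : Bᴴ = B := by
    open scoped MatrixOrder in exact (CFC.sqrt_nonneg M).posSemidef.1
  have hBsymm : Bᵀ = B := by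
    ext i j
    have := congrFun (congrFun hBH i) j
    simpa [Matrix.conjTranspose_apply] using this
  have hMdet : M.det ≠ 0 := ne_of_gt hMpd.det_pos
  have hBdet : IsUnit B.det := by
    refine isUnit_iff_ne_zero.mpr fun h => hMdet ?_
    rw [← hBB, Matrix.det_mul, h, mul_zero]
  set Binv : Matrix (Fin N) (Fin N) ℝ := B⁻¹ with hBinv
  have hrec : ∀ a : Fin N → ℝ, Binv *ᵥ (B *ᵥ a) = a := by
    intro a
    rw [Matrix.mulVec_mulVec, Matrix.nonsing_inv_mul _ hBdet, Matrix.one_mulVec]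
  -- norm facts
  have hmnd : ∀ u : ι → Fin N → ℝ, MnormPN u = Real.sqrt (∑ α, u α ⬝ᵥ (M *ᵥ u α)) := by
    rw [hMnormPN]; intro u; rfl
  have mnonneg : ∀ x : ι → Fin N → ℝ, 0 ≤ MnormPN x := by
    intro x; rw [hmnd]; exact Real.sqrt_nonneg _
  have mtri : ∀ x y : ι → Fin N → ℝ, MnormPN (x + y) ≤ MnormPN x + MnormPN y := by
    intro x y; rw [hmnd, hmnd, hmnd]; exact mn_triangle M B hBB hBsymm x y
  set c2M : ℝ := Real.sqrt (Fintype.card ι * N) * ((∑ i, ∑ j, |B i j|) + 1) with hc2M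
  have mup : ∀ u : ι → Fin N → ℝ, MnormPN u ≤ c2M * ‖u‖ := by
    intro u; rw [hmnd]; exact mn_upper M B hBB hBsymm u
  set biC : ℝ := (∑ i, ∑ j, |Binv i j|) + 1 with hbiCd
  have hbiC1 : (1:ℝ) ≤ biC := by
    have : (0:ℝ) ≤ ∑ i, ∑ j, |Binv i j| :=
      Finset.sum_nonneg fun _ _ => Finset.sum_nonneg fun _ _ => abs_nonneg _
    rw [hbiCd]; linarith
  have mlo : ∀ u : ι → Fin N → ℝ, ‖u‖ ≤ biC * MnormPN u := by
    intro u; rw [hmnd]; exact mn_lower M B Binv hBB hBsymm hrec u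
  have mDi : ∀ x : ι → Fin N → ℝ, MnormPN (opA Di x) ≤ phimin⁻¹ * MnormPN x := by
    intro x; rw [hmnd, hmnd]
    exact mn_opA_le M B hBB hBsymm Di phimin hphimin_pos hphimin x
  have hc2M0 : 0 ≤ c2M := by
    have : (0:ℝ) ≤ ∑ i, ∑ j, |B i j| :=
      Finset.sum_nonneg fun _ _ => Finset.sum_nonneg fun _ _ => abs_nonneg _
    rw [hc2M]; positivity
  -- rewriting T, Rop, Φ, uA in terms of opA
  have hTop : ∀ s u, T s u = opA (Δ s) u := by
    intro s u; rw [hT]; rfl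
  have hRopA : ∀ w, Rop w = w - opA (Δ (Di *ᵥ Fv vh w)) (opA Di vh) := by
    intro w; simp only [hRop]; rw [hTop]; rfl
  have huA2 : uA = opA Di vh := by
    have h1 : vh = opA (Δ sh) (S vh) := by rw [← hTop]; exact hfix
    rw [huA]
    conv_rhs => rw [h1, ← opA_mul, hDiL, opA_one]
  -- bound for S.symm
  set SC := LinearMap.toContinuousLinearMap (S.symm : (ι → Fin N → ℝ) →ₗ[ℝ] (ι → Fin N → ℝ))
    with hSCd
  have hSC : ∀ x, ‖S.symm x‖ ≤ (‖SC‖ + 1) * ‖x‖ := by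
    intro x
    have h1 : S.symm x = SC x := rfl
    rw [h1]
    refine (SC.le_opNorm x).trans ?_
    have := norm_nonneg x
    nlinarith [norm_nonneg (SC x)]

  -- entrywise constants
  have habs3 : ∀ f : ι → ι → ι → ℝ, (0:ℝ) ≤ ∑ α, ∑ β, ∑ γ, |f α β γ| := fun f =>
    Finset.sum_nonneg fun _ _ => Finset.sum_nonneg fun _ _ =>
      Finset.sum_nonneg fun _ _ => abs_nonneg _
  set cC : ℝ := ∑ α, ∑ β, ∑ γ, |c γ α β| with hcCd
  have hcC0 : 0 ≤ cC := habs3 _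
  have hΔentry : ∀ s : ι → ℝ, (∑ α, ∑ β, |Δ s α β|) ≤ cC * ‖s‖ := by
    intro s
    calc (∑ α, ∑ β, |Δ s α β|)
        ≤ ∑ α, ∑ β, ∑ γ, |c γ α β| * ‖s‖ := by
          refine Finset.sum_le_sum fun α _ => Finset.sum_le_sum fun β _ => ?_
          rw [hΔ]
          simp only [Matrix.of_apply]
          refine (Finset.abs_sum_le_sum_abs _ _).trans (Finset.sum_le_sum fun γ _ => ?_)
          rw [abs_mul]
          exact mul_le_mul_of_nonneg_left
            (by simpa [Real.norm_eq_abs] using norm_le_pi_norm s γ) (abs_nonneg _)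
      _ = cC * ‖s‖ := by rw [hcCd]; simp [Finset.sum_mul]
  set mC : ℝ := ∑ i, ∑ j, |M i j| with hmCd
  have hmC0 : 0 ≤ mC :=
    Finset.sum_nonneg fun _ _ => Finset.sum_nonneg fun _ _ => abs_nonneg _
  set cC2 : ℝ := ∑ α, ∑ β, ∑ γ, |c α β γ| with hcC2d
  have hcC20 : 0 ≤ cC2 := habs3 _
  have hFvb : ∀ v w : ι → Fin N → ℝ, ‖Fv v w‖ ≤ cC2 * mC * ‖v‖ * ‖w‖ := by
    intro v w
    have hdot : ∀ (β γ : ι), |v β ⬝ᵥ (M *ᵥ w γ)| ≤ mC * ‖v‖ * ‖w‖ := by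
      intro β γ
      have hrow : ∀ i, |(M *ᵥ w γ) i| ≤ (∑ j, |M i j|) * ‖w‖ := by
        intro i
        have : (M *ᵥ w γ) i = ∑ j, M i j * w γ j := rfl
        rw [this]
        refine (Finset.abs_sum_le_sum_abs _ _).trans ?_
        rw [Finset.sum_mul]
        refine Finset.sum_le_sum fun j _ => ?_
        rw [abs_mul]
        refine mul_le_mul_of_nonneg_left ?_ (abs_nonneg _)
        exact le_trans (by simpa [Real.norm_eq_abs] using norm_le_pi_norm (w γ) j)
          (norm_le_pi_norm w γ)
      calc |v β ⬝ᵥ (M *ᵥ w γ)| = |∑ i, v β i * (M *ᵥ w γ) i| := rfl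
        _ ≤ ∑ i, |v β i| * |(M *ᵥ w γ) i| := by
            refine (Finset.abs_sum_le_sum_abs _ _).trans ?_
            exact le_of_eq (Finset.sum_congr rfl fun i _ => abs_mul _ _)
        _ ≤ ∑ i, ‖v‖ * ((∑ j, |M i j|) * ‖w‖) := by
            refine Finset.sum_le_sum fun i _ => ?_
            refine mul_le_mul ?_ (hrow i) (abs_nonneg _) (norm_nonneg _)
            exact le_trans (by simpa [Real.norm_eq_abs] using norm_le_pi_norm (v β) i)
              (norm_le_pi_norm v β)
        _ = ‖v‖ * ((∑ i, ∑ j, |M i j|) * ‖w‖) := by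
            rw [← Finset.mul_sum, ← Finset.sum_mul]
        _ = mC * ‖v‖ * ‖w‖ := by rw [← hmCd]; ring
    have hC : 0 ≤ cC2 * mC * ‖v‖ * ‖w‖ := by
      have := norm_nonneg v; have := norm_nonneg w; positivity
    rw [hFv, pi_norm_le_iff_of_nonneg hC]
    intro α
    rw [Real.norm_eq_abs]
    calc |∑ β, ∑ γ, c α β γ * (v β ⬝ᵥ (M *ᵥ w γ))|
        ≤ ∑ β, ∑ γ, |c α β γ| * (mC * ‖v‖ * ‖w‖) := by
          refine (Finset.abs_sum_le_sum_abs _ _).trans (Finset.sum_le_sum fun β _ => ?_)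
          refine (Finset.abs_sum_le_sum_abs _ _).trans (Finset.sum_le_sum fun γ _ => ?_)
          rw [abs_mul]
          exact mul_le_mul_of_nonneg_left (hdot β γ) (abs_nonneg _)
      _ = (∑ β, ∑ γ, |c α β γ|) * (mC * ‖v‖ * ‖w‖) := by simp [Finset.sum_mul]
      _ ≤ cC2 * (mC * ‖v‖ * ‖w‖) := by
          refine mul_le_mul_of_nonneg_right ?_ (by positivity)
          rw [hcC2d]
          exact Finset.single_le_sum (f := fun α => ∑ β, ∑ γ, |c α β γ|)
            (fun _ _ => Finset.sum_nonneg fun _ _ => Finset.sum_nonneg fun _ _ => abs_nonneg _)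
            (Finset.mem_univ α)
      _ = cC2 * mC * ‖v‖ * ‖w‖ := by ring
  set dC : ℝ := ∑ α, ∑ β, |Di α β| with hdCd
  have hdC0 : 0 ≤ dC :=
    Finset.sum_nonneg fun _ _ => Finset.sum_nonneg fun _ _ => abs_nonneg _

  -- basic limits
  have ev0 : Filter.Tendsto t (nhds 0) (nhds 0) := by
    have h := htcont
    rw [ContinuousAt, ht0] at h
    exact h
  have evsmall : ∀ η : ℝ, 0 < η → ∀ᶠ w in nhds (0 : ι → Fin N → ℝ), ‖t w‖ < η := by
    intro η hη
    have h := ev0 (Metric.ball_mem_nhds (0 : ι → ℝ) hη)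
    refine Filter.eventually_of_mem h ?_
    intro w hw
    simpa [Metric.mem_ball, dist_zero_right] using hw
  have evw1 : ∀ᶠ w in nhds (0 : ι → Fin N → ℝ), ‖w‖ < 1 := by
    refine Filter.eventually_of_mem (Metric.ball_mem_nhds (0 : ι → Fin N → ℝ) one_pos) ?_
    intro w hw
    simpa [Metric.mem_ball, dist_zero_right] using hw
  -- the implicit-function equation, rearranged
  have evF2 : ∀ᶠ w in nhds (0 : ι → Fin N → ℝ),
      Δ sh *ᵥ t w = Fv vh w + (2⁻¹ : ℝ) • Fv w w - (2⁻¹ : ℝ) • (Δ (t w) *ᵥ t w) := by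
    filter_upwards [htF] with w hw
    funext α
    rw [hF] at hw
    have h0 := congrFun hw α
    simp only [] at h0
    have hz := congrFun hFzero α
    rw [hF] at hz
    simp only [Pi.zero_apply] at h0 hz
    have hex := Stmt13Aux.expand_F c hc1 hc2 M hMsymm sh (t w) vh w α
    have m1 : (Δ sh *ᵥ t w) α = ∑ β, ∑ γ, c α β γ * sh β * t w γ := by
      rw [hΔ]; exact Stmt13Aux.mulVec_Δ c hc1 sh (t w) α
    have m2 : (Δ (t w) *ᵥ t w) α = ∑ β, ∑ γ, c α β γ * t w β * t w γ := by
      rw [hΔ]; exact Stmt13Aux.mulVec_Δ c hc1 (t w) (t w) α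
    have m3 : Fv vh w α = ∑ β, ∑ γ, c α β γ * (vh β ⬝ᵥ (M *ᵥ w γ)) := by rw [hFv]
    have m4 : Fv w w α = ∑ β, ∑ γ, c α β γ * (w β ⬝ᵥ (M *ᵥ w γ)) := by rw [hFv]
    simp only [Pi.add_apply, Pi.sub_apply, Pi.smul_apply, smul_eq_mul]
    rw [m1, m2, m3, m4]
    linarith [hex, h0, hz]
  -- solve for t w
  have evteq : ∀ᶠ w in nhds (0 : ι → Fin N → ℝ),
      t w = Di *ᵥ Fv vh w + (2⁻¹ : ℝ) • (Di *ᵥ Fv w w)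
        - (2⁻¹ : ℝ) • (Di *ᵥ (Δ (t w) *ᵥ t w)) := by
    filter_upwards [evF2] with w hw
    have h1 : Di *ᵥ (Δ sh *ᵥ t w) = t w := by
      rw [Matrix.mulVec_mulVec, hDiL, Matrix.one_mulVec]
    conv_lhs => rw [← h1, hw]
    rw [Matrix.mulVec_sub, Matrix.mulVec_add, Matrix.mulVec_smul, Matrix.mulVec_smul]
  -- first-order bound for t
  set Cl : ℝ := dC * (cC2 * mC * ‖vh‖) with hCld
  have hCl0 : 0 ≤ Cl := mul_nonneg hdC0 (mul_nonneg (mul_nonneg hcC20 hmC0) (norm_nonneg vh))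
  set C2 : ℝ := dC * (cC2 * mC) with hC2d
  have hC20 : 0 ≤ C2 := mul_nonneg hdC0 (mul_nonneg hcC20 hmC0)
  set K : ℝ := 2 * Cl + C2 with hKd
  have hK0 : 0 ≤ K := by rw [hKd]; linarith
  have hla : ∀ w : ι → Fin N → ℝ, ‖Di *ᵥ Fv vh w‖ ≤ Cl * ‖w‖ := by
    intro w
    have h := Stmt13Aux.mulVec_norm_le' (le_refl dC) (hFvb vh w)
    calc ‖Di *ᵥ Fv vh w‖ ≤ dC * (cC2 * mC * ‖vh‖ * ‖w‖) := h
      _ = Cl * ‖w‖ := by rw [hCld]; ring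
  have hlb : ∀ w : ι → Fin N → ℝ, ‖Di *ᵥ Fv w w‖ ≤ C2 * (‖w‖ * ‖w‖) := by
    intro w
    have h := Stmt13Aux.mulVec_norm_le' (le_refl dC) (hFvb w w)
    calc ‖Di *ᵥ Fv w w‖ ≤ dC * (cC2 * mC * ‖w‖ * ‖w‖) := h
      _ = C2 * (‖w‖ * ‖w‖) := by rw [hC2d]; ring
  have hlc : ∀ w : ι → Fin N → ℝ,
      ‖Di *ᵥ (Δ (t w) *ᵥ t w)‖ ≤ dC * (cC * ‖t w‖ * ‖t w‖) := by
    intro w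
    have hin : ‖Δ (t w) *ᵥ t w‖ ≤ cC * ‖t w‖ * ‖t w‖ :=
      Stmt13Aux.mulVec_norm_le' (hΔentry (t w)) (le_refl ‖t w‖)
    exact Stmt13Aux.mulVec_norm_le' (le_refl dC) hin
  have evK : ∀ᶠ w in nhds (0 : ι → Fin N → ℝ), ‖t w‖ ≤ K * ‖w‖ := by
    have hdcc : (0:ℝ) ≤ dC * cC := mul_nonneg hdC0 hcC0
    have hη : (0:ℝ) < (dC * cC + 1)⁻¹ := inv_pos.mpr (by linarith)
    filter_upwards [evteq, evw1, evsmall _ hη] with w hw hw1 hts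
    have htri : ‖t w‖ ≤ ‖Di *ᵥ Fv vh w‖ + 2⁻¹ * ‖Di *ᵥ Fv w w‖
        + 2⁻¹ * ‖Di *ᵥ (Δ (t w) *ᵥ t w)‖ := by
      conv_lhs => rw [hw]
      refine (norm_sub_le _ _).trans ?_
      have h1 := norm_add_le (Di *ᵥ Fv vh w) ((2⁻¹ : ℝ) • (Di *ᵥ Fv w w))
      have h2 : ‖(2⁻¹ : ℝ) • (Di *ᵥ Fv w w)‖ = 2⁻¹ * ‖Di *ᵥ Fv w w‖ := by
        rw [norm_smul, Real.norm_eq_abs]; norm_num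
      have h3 : ‖(2⁻¹ : ℝ) • (Di *ᵥ (Δ (t w) *ᵥ t w))‖
          = 2⁻¹ * ‖Di *ᵥ (Δ (t w) *ᵥ t w)‖ := by
        rw [norm_smul, Real.norm_eq_abs]; norm_num
      rw [h2] at h1
      rw [h3]
      linarith
    have hquad : dC * cC * ‖t w‖ ≤ 1 := by
      have h4 : dC * cC * ‖t w‖ ≤ dC * cC * (dC * cC + 1)⁻¹ :=
        mul_le_mul_of_nonneg_left hts.le hdcc
      have h5 : dC * cC * (dC * cC + 1)⁻¹ ≤ 1 := by
        rw [mul_inv_le_iff₀ (by linarith)]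
        linarith
      linarith
    have hA := hla w
    have hBq := hlb w
    have hCq := hlc w
    have hw2 : ‖w‖ * ‖w‖ ≤ ‖w‖ := by nlinarith [norm_nonneg w]
    have ht2 : dC * (cC * ‖t w‖ * ‖t w‖) ≤ ‖t w‖ := by nlinarith [norm_nonneg (t w)]
    rw [hKd]
    nlinarith [norm_nonneg (t w), norm_nonneg w]
  set Cq : ℝ := 2⁻¹ * C2 + 2⁻¹ * (dC * cC) * K * K with hCqd
  have hCq0 : 0 ≤ Cq := by
    have h1 : (0:ℝ) ≤ 2⁻¹ * (dC * cC) * K * K :=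
      mul_nonneg (mul_nonneg (mul_nonneg (by norm_num) (mul_nonneg hdC0 hcC0)) hK0) hK0
    have h2 : (0:ℝ) ≤ 2⁻¹ * C2 := by linarith
    rw [hCqd]; linarith
  have evlin : ∀ᶠ w in nhds (0 : ι → Fin N → ℝ),
      ‖t w - Di *ᵥ Fv vh w‖ ≤ Cq * (‖w‖ * ‖w‖) := by
    filter_upwards [evteq, evK] with w hw hK
    have h1 : t w - Di *ᵥ Fv vh w
        = (2⁻¹ : ℝ) • (Di *ᵥ Fv w w) - (2⁻¹ : ℝ) • (Di *ᵥ (Δ (t w) *ᵥ t w)) := by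
      conv_lhs => rw [hw]
      abel
    rw [h1]
    refine (norm_sub_le _ _).trans ?_
    have h2 : ‖(2⁻¹ : ℝ) • (Di *ᵥ Fv w w)‖ = 2⁻¹ * ‖Di *ᵥ Fv w w‖ := by
      rw [norm_smul, Real.norm_eq_abs]; norm_num
    have h3 : ‖(2⁻¹ : ℝ) • (Di *ᵥ (Δ (t w) *ᵥ t w))‖
        = 2⁻¹ * ‖Di *ᵥ (Δ (t w) *ᵥ t w)‖ := by
      rw [norm_smul, Real.norm_eq_abs]; norm_num
    rw [h2, h3]
    have hBq := hlb w
    have hCc := hlc w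
    have ht2 : ‖t w‖ * ‖t w‖ ≤ (K * ‖w‖) * (K * ‖w‖) :=
      mul_le_mul hK hK (norm_nonneg _) (mul_nonneg hK0 (norm_nonneg _))
    have h5 : dC * cC * (‖t w‖ * ‖t w‖) ≤ dC * cC * ((K * ‖w‖) * (K * ‖w‖)) :=
      mul_le_mul_of_nonneg_left ht2 (mul_nonneg hdC0 hcC0)
    have h6 : dC * (cC * ‖t w‖ * ‖t w‖) = dC * cC * (‖t w‖ * ‖t w‖) := by ring
    calc 2⁻¹ * ‖Di *ᵥ Fv w w‖ + 2⁻¹ * ‖Di *ᵥ (Δ (t w) *ᵥ t w)‖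
        ≤ 2⁻¹ * (C2 * (‖w‖ * ‖w‖)) + 2⁻¹ * (dC * (cC * ‖t w‖ * ‖t w‖)) :=
          add_le_add (mul_le_mul_of_nonneg_left hBq (by norm_num))
            (mul_le_mul_of_nonneg_left hCc (by norm_num))
      _ ≤ 2⁻¹ * (C2 * (‖w‖ * ‖w‖)) + 2⁻¹ * (dC * cC * ((K * ‖w‖) * (K * ‖w‖))) := by
          rw [h6]
          exact add_le_add le_rfl (mul_le_mul_of_nonneg_left h5 (by norm_num))
      _ = (2⁻¹ * C2 + 2⁻¹ * (dC * cC) * K * K) * (‖w‖ * ‖w‖) := by ring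
      _ = Cq * (‖w‖ * ‖w‖) := by rw [hCqd]

  -- continuity of the matrix inverse along the path
  have hΔlin : ∀ s1 s2 : ι → ℝ, Δ (s1 + s2) = Δ s1 + Δ s2 := by
    intro s1 s2
    rw [hΔ]
    ext α β
    simp [Matrix.add_apply, mul_add, Finset.sum_add_distrib]
  have hΔsub : ∀ s1 s2 : ι → ℝ, Δ (s1 - s2) = Δ s1 - Δ s2 := by
    intro s1 s2
    rw [hΔ]
    ext α β
    simp [Matrix.sub_apply, mul_sub, Finset.sum_sub_distrib]
  have hΔcont : Continuous Δ := by
    rw [hΔ]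
    refine continuous_matrix ?_
    intro α β
    simp only [Matrix.of_apply]
    exact continuous_finset_sum _ fun γ _ => continuous_const.mul (continuous_apply γ)
  have evA : Filter.Tendsto (fun w => Δ (sh + t w)) (nhds 0) (nhds (Δ sh)) := by
    have h1 : Filter.Tendsto (fun w : ι → Fin N → ℝ => sh + t w) (nhds 0) (nhds sh) := by
      have h2 := Filter.Tendsto.const_add sh ev0
      simpa using h2
    exact (hΔcont.tendsto sh).comp h1
  have hdet0 : (Δ sh).det ≠ 0 := hdet.ne_zero
  have evdet : Filter.Tendsto (fun w => (Δ (sh + t w)).det) (nhds 0) (nhds ((Δ sh).det)) :=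
    ((continuous_id.matrix_det).tendsto (Δ sh)).comp evA
  have evunit : ∀ᶠ w in nhds (0 : ι → Fin N → ℝ), IsUnit (Δ (sh + t w)).det := by
    filter_upwards [evdet.eventually_ne hdet0] with w hw
    exact isUnit_iff_ne_zero.mpr hw
  have evinv : Filter.Tendsto (fun w => (Δ (sh + t w))⁻¹) (nhds 0) (nhds Di) := by
    have heq : ∀ w : ι → Fin N → ℝ, (Δ (sh + t w))⁻¹
        = ((Δ (sh + t w)).det)⁻¹ • (Δ (sh + t w)).adjugate := by
      intro w
      rw [Matrix.inv_def, Ring.inverse_eq_inv']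
    have heq0 : Di = ((Δ sh).det)⁻¹ • (Δ sh).adjugate := by
      rw [hDi, Matrix.inv_def, Ring.inverse_eq_inv']
    simp only [heq]
    rw [heq0]
    exact (evdet.inv₀ hdet0).smul
      (((continuous_id.matrix_adjugate).tendsto (Δ sh)).comp evA)
  have evdC : ∀ᶠ w in nhds (0 : ι → Fin N → ℝ),
      (∑ α, ∑ β, |(Δ (sh + t w))⁻¹ α β|) < dC + 1 := by
    have hcont2 : Continuous fun A : Matrix ι ι ℝ => ∑ α, ∑ β, |A α β| :=
      continuous_finset_sum _ fun α _ => continuous_finset_sum _ fun β _ =>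
        ((continuous_apply β).comp (continuous_apply α)).abs
    have h := (hcont2.tendsto Di).comp evinv
    exact h.eventually_lt_const (lt_add_one dC)

  -- the main error estimate
  set CG : ℝ := cC * Cq * (dC * ‖vh‖) + cC * K * dC
      + cC * K * dC * cC * Cl * (dC * ‖vh‖) with hCGd
  have hCG0 : 0 ≤ CG := by
    have hv0 := norm_nonneg vh
    have g1 : (0:ℝ) ≤ cC * Cq * (dC * ‖vh‖) :=
      mul_nonneg (mul_nonneg hcC0 hCq0) (mul_nonneg hdC0 hv0)
    have g2 : (0:ℝ) ≤ cC * K * dC := mul_nonneg (mul_nonneg hcC0 hK0) hdC0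
    have g3 : (0:ℝ) ≤ cC * K * dC * cC * Cl * (dC * ‖vh‖) :=
      mul_nonneg (mul_nonneg (mul_nonneg g2 hcC0) hCl0) (mul_nonneg hdC0 hv0)
    rw [hCGd]; linarith
  set CE : ℝ := (dC + 1) * CG with hCEd
  have hCE0 : 0 ≤ CE := mul_nonneg (by linarith) hCG0
  have everr : ∀ᶠ w in nhds (0 : ι → Fin N → ℝ),
      ‖opA ((Δ (sh + t w))⁻¹) (vh + w) - opA Di vh - opA Di (Rop w)‖
        ≤ CE * (‖w‖ * ‖w‖) := by
    filter_upwards [evunit, evdC, evK, evlin] with w hUnit hDC hKw hLin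
    have hAws : Δ (sh + t w) = Δ sh + Δ (t w) := hΔlin sh (t w)
    have e0 : opA (Δ (sh + t w)) (opA ((Δ (sh + t w))⁻¹) (vh + w)) = vh + w := by
      rw [← opA_mul, Matrix.mul_nonsing_inv _ hUnit, opA_one]
    have e1 : ∀ z : ι → Fin N → ℝ, opA (Δ (sh + t w)) (opA Di z) = z + opA (Δ (t w)) (opA Di z) := by
      intro z
      rw [← opA_mul, hAws, Matrix.add_mul, hDiR, opA_add_left, opA_one, opA_mul]
    have herr2 : opA ((Δ (sh + t w))⁻¹) (vh + w) - opA Di vh - opA Di (Rop w)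
        = opA ((Δ (sh + t w))⁻¹) (vh + w) - opA Di vh - opA Di w
          + opA Di (opA (Δ (Di *ᵥ Fv vh w)) (opA Di vh)) := by
      rw [hRopA w, opA_sub_right]
      abel
    have hGid : opA (Δ (sh + t w)) (opA ((Δ (sh + t w))⁻¹) (vh + w) - opA Di vh - opA Di w
          + opA Di (opA (Δ (Di *ᵥ Fv vh w)) (opA Di vh)))
        = opA (Δ (Di *ᵥ Fv vh w - t w)) (opA Di vh) - opA (Δ (t w)) (opA Di w)
          + opA (Δ (t w)) (opA Di (opA (Δ (Di *ᵥ Fv vh w)) (opA Di vh))) := by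
      rw [opA_add_right, opA_sub_right, opA_sub_right, e0, e1, e1, e1,
        hΔsub (Di *ᵥ Fv vh w) (t w), opA_sub_left]
      abel
    have hfin : opA ((Δ (sh + t w))⁻¹) (vh + w) - opA Di vh - opA Di w
          + opA Di (opA (Δ (Di *ᵥ Fv vh w)) (opA Di vh))
        = opA ((Δ (sh + t w))⁻¹)
            (opA (Δ (Di *ᵥ Fv vh w - t w)) (opA Di vh) - opA (Δ (t w)) (opA Di w)
              + opA (Δ (t w)) (opA Di (opA (Δ (Di *ᵥ Fv vh w)) (opA Di vh)))) := by
      rw [← hGid, ← opA_mul ((Δ (sh + t w))⁻¹) (Δ (sh + t w)),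
        Matrix.nonsing_inv_mul _ hUnit, opA_one]
    have b0 : ‖opA Di vh‖ ≤ dC * ‖vh‖ := opA_norm_le' le_rfl le_rfl
    have bL : ‖Di *ᵥ Fv vh w‖ ≤ Cl * ‖w‖ := hla w
    have b1 : ‖opA (Δ (Di *ᵥ Fv vh w - t w)) (opA Di vh)‖
        ≤ (cC * (Cq * (‖w‖ * ‖w‖))) * (dC * ‖vh‖) := by
      refine opA_norm_le' ((hΔentry _).trans ?_) b0
      refine mul_le_mul_of_nonneg_left ?_ hcC0
      rw [norm_sub_rev]
      exact hLin
    have b2 : ‖opA (Δ (t w)) (opA Di w)‖ ≤ (cC * (K * ‖w‖)) * (dC * ‖w‖) :=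
      opA_norm_le' ((hΔentry _).trans (mul_le_mul_of_nonneg_left hKw hcC0))
        (opA_norm_le' le_rfl le_rfl)
    have b3 : ‖opA (Δ (t w)) (opA Di (opA (Δ (Di *ᵥ Fv vh w)) (opA Di vh)))‖
        ≤ (cC * (K * ‖w‖)) * (dC * ((cC * (Cl * ‖w‖)) * (dC * ‖vh‖))) := by
      refine opA_norm_le' ((hΔentry _).trans (mul_le_mul_of_nonneg_left hKw hcC0)) ?_
      refine opA_norm_le' le_rfl ?_
      exact opA_norm_le' ((hΔentry _).trans (mul_le_mul_of_nonneg_left bL hcC0)) b0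
    have hG : ‖opA (Δ (Di *ᵥ Fv vh w - t w)) (opA Di vh) - opA (Δ (t w)) (opA Di w)
          + opA (Δ (t w)) (opA Di (opA (Δ (Di *ᵥ Fv vh w)) (opA Di vh)))‖
        ≤ CG * (‖w‖ * ‖w‖) := by
      refine (norm_add_le _ _).trans ?_
      have h4 := norm_sub_le (opA (Δ (Di *ᵥ Fv vh w - t w)) (opA Di vh))
        (opA (Δ (t w)) (opA Di w))
      have h5 : (cC * (Cq * (‖w‖ * ‖w‖))) * (dC * ‖vh‖) + (cC * (K * ‖w‖)) * (dC * ‖w‖)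
          + (cC * (K * ‖w‖)) * (dC * ((cC * (Cl * ‖w‖)) * (dC * ‖vh‖)))
          = CG * (‖w‖ * ‖w‖) := by rw [hCGd]; ring
      linarith
    calc ‖opA ((Δ (sh + t w))⁻¹) (vh + w) - opA Di vh - opA Di (Rop w)‖
        = ‖opA ((Δ (sh + t w))⁻¹)
            (opA (Δ (Di *ᵥ Fv vh w - t w)) (opA Di vh) - opA (Δ (t w)) (opA Di w)
              + opA (Δ (t w)) (opA Di (opA (Δ (Di *ᵥ Fv vh w)) (opA Di vh))))‖ := by
          rw [herr2, hfin]
      _ ≤ (dC + 1) * (CG * (‖w‖ * ‖w‖)) := opA_norm_le' (le_of_lt hDC) hG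
      _ = CE * (‖w‖ * ‖w‖) := by rw [hCEd]; ring

  -- final assembly
  intro ε hε
  rw [Metric.eventually_nhds_iff] at everr
  obtain ⟨δ0, hδ0, Herr⟩ := everr
  set Cw : ℝ := (‖SC‖ + 1) * biC with hCwd
  have hSC0 := norm_nonneg SC
  have hCw1 : (1:ℝ) ≤ Cw := by
    have h1 : (0:ℝ) ≤ ‖SC‖ * biC := mul_nonneg hSC0 (by linarith)
    rw [hCwd]
    nlinarith
  have hCw0 : (0:ℝ) < Cw := lt_of_lt_of_le one_pos hCw1
  set D2 : ℝ := (c2M + 1) * (CE + 1) * Cw * Cw with hD2d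
  have hD2p : (0:ℝ) < D2 := by
    have h1 : (0:ℝ) < c2M + 1 := by linarith
    have h2 : (0:ℝ) < CE + 1 := by linarith
    rw [hD2d]
    exact mul_pos (mul_pos (mul_pos h1 h2) hCw0) hCw0
  refine ⟨min (δ0 / Cw) (ε / D2), lt_min (div_pos hδ0 hCw0) (div_pos hε hD2p), ?_⟩
  intro u hu
  set m : ℝ := MnormPN (u - uA) with hm
  have hm0 : 0 ≤ m := mnonneg _
  set w : ι → Fin N → ℝ := S.symm (u - uA) with hwd
  have hwb : ‖w‖ ≤ Cw * m := by
    calc ‖w‖ ≤ (‖SC‖ + 1) * ‖u - uA‖ := hSC _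
      _ ≤ (‖SC‖ + 1) * (biC * m) := by
          refine mul_le_mul_of_nonneg_left (mlo _) ?_
          linarith
      _ = Cw * m := by rw [hCwd]; ring
  have hwlt : ‖w‖ < δ0 := by
    have h1 : m < δ0 / Cw := lt_of_lt_of_le hu (min_le_left _ _)
    rw [lt_div_iff₀ hCw0] at h1
    have h2 : Cw * m = m * Cw := mul_comm _ _
    linarith
  have herr := Herr (show dist w 0 < δ0 by rwa [dist_zero_right])
  have hsymm_uA : S.symm uA = vh := by rw [huA]; exact S.symm_apply_apply vh
  have hssu : S.symm u - vh = w := by rw [hwd, map_sub, hsymm_uA]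
  have hsu : S.symm u = vh + w := by rw [← hssu]; abel
  have hPhi : Φ u = opA ((Δ (sh + t w))⁻¹) (vh + w) := by
    rw [hΦ]
    funext α i
    simp only []
    rw [hssu, hsu]
    rfl
  have hdecomp : Φ u - uA = opA Di (Rop w)
      + (opA ((Δ (sh + t w))⁻¹) (vh + w) - opA Di vh - opA Di (Rop w)) := by
    rw [hPhi, huA2]; abel
  have hinv0 : (0:ℝ) ≤ phimin⁻¹ := inv_nonneg.mpr hphimin_pos.le
  calc MnormPN (Φ u - uA)
      ≤ MnormPN (opA Di (Rop w))
        + MnormPN (opA ((Δ (sh + t w))⁻¹) (vh + w) - opA Di vh - opA Di (Rop w)) := by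
        rw [hdecomp]; exact mtri _ _
    _ ≤ phimin⁻¹ * (psimax * m) + c2M * (CE * (‖w‖ * ‖w‖)) := by
        refine add_le_add ?_ ?_
        · refine (mDi _).trans ?_
          exact mul_le_mul_of_nonneg_left (hpsimax (u - uA)) hinv0
        · exact (mup _).trans (mul_le_mul_of_nonneg_left herr hc2M0)
    _ ≤ psimax / phimin * m + ε * m := by
        refine add_le_add (le_of_eq ?_) ?_
        · rw [div_eq_mul_inv]; ring
        · have h1 : m < ε / D2 := lt_of_lt_of_le hu (min_le_right _ _)
          have hCwm0 : 0 ≤ Cw * m := mul_nonneg hCw0.le hm0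
          have h2 : ‖w‖ * ‖w‖ ≤ (Cw * m) * (Cw * m) :=
            mul_le_mul hwb hwb (norm_nonneg _) hCwm0
          have h3 : c2M * (CE * (‖w‖ * ‖w‖)) ≤ (c2M * CE * Cw * Cw * m) * m := by
            have h31 := mul_le_mul_of_nonneg_left h2 (mul_nonneg hc2M0 hCE0)
            calc c2M * (CE * (‖w‖ * ‖w‖)) = (c2M * CE) * (‖w‖ * ‖w‖) := by ring
              _ ≤ (c2M * CE) * ((Cw * m) * (Cw * m)) := h31
              _ = (c2M * CE * Cw * Cw * m) * m := by ring
          have h4 : c2M * CE * Cw * Cw ≤ D2 := by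
            have e1 : c2M * CE ≤ (c2M + 1) * (CE + 1) := by nlinarith
            rw [hD2d]
            calc c2M * CE * Cw * Cw = (c2M * CE) * (Cw * Cw) := by ring
              _ ≤ ((c2M + 1) * (CE + 1)) * (Cw * Cw) :=
                  mul_le_mul_of_nonneg_right e1 (mul_nonneg hCw0.le hCw0.le)
              _ = (c2M + 1) * (CE + 1) * Cw * Cw := by ring
          have h5 : c2M * CE * Cw * Cw * m ≤ D2 * m := mul_le_mul_of_nonneg_right h4 hm0
          have h6 : D2 * m ≤ ε := by
            rw [lt_div_iff₀ hD2p] at h1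
            have : D2 * m = m * D2 := mul_comm _ _
            linarith
          calc c2M * (CE * (‖w‖ * ‖w‖)) ≤ (c2M * CE * Cw * Cw * m) * m := h3
            _ ≤ ε * m := mul_le_mul_of_nonneg_right (le_trans h5 h6) hm0
    _ = (psimax / phimin + ε) * m := by ring
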